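/- Let S be a multiplicative submonoid of A with σ(S) ⊆ S, let B := S⁻¹A be the localization, and let σ_B be the unique R-algebra endomorphism of B with σ_B ∘ (canonical map A → B) = (canonical map) ∘ σ. Then every σ-derivation D : A → M over R extends uniquely to a σ_B-derivation D_B : B → B ⊗_A M over R (i.e., D_B(a/1) = 1 ⊗ D(a) for all a ∈ A); it is given by the formula D_B(a/s) = (1/(s·σ(s))) • (s•(1 ⊗ D(a)) − a•(1 ⊗ D(s))) for a ∈ A, s ∈ S. -/

import Mathlib

open scoped TensorProduct

set_option linter.unusedSectionVars false
set_option maxHeartbeats 1000000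

namespace Stmt6Aux

variable {R A M : Type*} [CommRing R] [CommRing A] [Algebra R A]
  [AddCommGroup M] [Module R M] [Module A M] [IsScalarTower R A M]

section Abstract

variable (D : A →ₗ[R] M) (B : Type*) [CommRing B] [Algebra A B]

noncomputable def d (a : A) : B ⊗[A] M := (1 : B) ⊗ₜ[A] D a

variable {D B}
variable {σ : A →ₐ[R] A}

local notation "ι" => algebraMap A B

lemma d_add (x y : A) : d D B (x + y) = d D B x + d D B y := by
  simp [d, TensorProduct.tmul_add]

lemma d_smulA (a x : A) : ι a • d D B x = (1 : B) ⊗ₜ[A] (a • D x) := by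
  simp only [d, algebraMap_smul, TensorProduct.tmul_smul]

lemma d_mul (hD : ∀ x y : A, D (x * y) = y • D x + σ x • D y) (x y : A) :
    d D B (x * y) = ι y • d D B x + ι (σ x) • d D B y := by
  rw [d_smulA, d_smulA, d, hD, TensorProduct.tmul_add]

lemma d_one (hD : ∀ x y : A, D (x * y) = y • D x + σ x • D y) : d D B 1 = 0 := by
  have := hD 1 1
  simp only [mul_one, map_one, one_smul] at this
  rw [d, left_eq_add.mp this, TensorProduct.tmul_zero]

lemma d_star (hD : ∀ x y : A, D (x * y) = y • D x + σ x • D y) (x y : A) :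
    (ι y - ι (σ y)) • d D B x = (ι x - ι (σ x)) • d D B y := by
  have h1 := d_mul (B := B) hD x y
  have h2 := d_mul (B := B) hD y x
  rw [mul_comm] at h2
  rw [h1] at h2
  linear_combination (norm := module) h2

lemma d_algHom (hD : ∀ x y : A, D (x * y) = y • D x + σ x • D y) (r : R) :
    d D B (algebraMap R A r) = 0 := by
  have : D (algebraMap R A r) = r • D 1 := by
    rw [Algebra.algebraMap_eq_smul_one, map_smul]
  have h1 := hD 1 1
  simp only [mul_one, map_one, one_smul] at h1
  rw [d, this, left_eq_add.mp h1, smul_zero, TensorProduct.tmul_zero]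

/-- core identity for well-definedness -/
lemma wd_core (hD : ∀ x y : A, D (x * y) = y • D x + σ x • D y)
    (a b s t : A) (hrel : ι t * ι a = ι s * ι b)
    (h1 : ι a • d D B t + ι (σ t) • d D B a = ι b • d D B s + ι (σ s) • d D B b) :
    ι (t * σ t) • (ι s • d D B a - ι a • d D B s) =
      ι (s * σ s) • (ι t • d D B b - ι b • d D B t) := by
  have hst := d_star (B := B) hD s t
  simp only [map_mul]
  linear_combination (norm := module) (ι s * ι t) • h1 + (ι t * ι a) • hst +
    ((ι t) * hrel.symm) • d D B s + ((ι (σ s)) * hrel.symm) • d D B t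

/-- core identity for additivity -/
lemma add_core (hD : ∀ x y : A, D (x * y) = y • D x + σ x • D y) (a b s t : A) :
    ι ((s * σ s) * (t * σ t)) •
        (ι (s * t) • d D B (s * b + t * a) - ι (s * b + t * a) • d D B (s * t)) =
      ι ((s * t) * σ (s * t)) •
        (ι (t * σ t) • (ι s • d D B a - ι a • d D B s) +
          ι (s * σ s) • (ι t • d D B b - ι b • d D B t)) := by
  have hst := d_star (B := B) hD s t
  have hsb := d_mul (B := B) hD s b
  have hta := d_mul (B := B) hD t a
  have hstm := d_mul (B := B) hD s t
  rw [d_add, hsb, hta, hstm]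
  simp only [map_mul, map_add]
  linear_combination (norm := module) (-(ι s * ι (σ s) * ι t * ι (σ t) * ι t * ι a)) • hst

/-- core identity for the Leibniz rule -/
lemma leibniz_core (hD : ∀ x y : A, D (x * y) = y • D x + σ x • D y) (a b s t : A) :
    ι ((t * (s * σ s)) * (σ s * (t * σ t))) •
        (ι (s * t) • d D B (a * b) - ι (a * b) • d D B (s * t)) =
      ι ((s * t) * σ (s * t)) •
        (ι (σ s * (t * σ t)) • (ι b • (ι s • d D B a - ι a • d D B s)) +
          ι (t * (s * σ s)) • (ι (σ a) • (ι t • d D B b - ι b • d D B t))) := by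
  have hsta := d_star (B := B) hD a t
  have hsts := d_star (B := B) hD s t
  rw [d_mul (B := B) hD a b, d_mul (B := B) hD s t]
  simp only [map_mul]
  linear_combination (norm := module)
    (ι s * ι t * ι (σ s) * ι (σ t) * ι s * ι t * ι (σ s) * ι b) • hsta -
    (ι s * ι t * ι (σ s) * ι (σ t) * ι a * ι b * ι t * ι (σ s)) • hsts

/-- core identity for R-smul -/
lemma smul_core (hD : ∀ x y : A, D (x * y) = y • D x + σ x • D y) (r : R) (a s : A) :
    ι s • d D B (algebraMap R A r * a) - ι (algebraMap R A r * a) • d D B s =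
      ι (algebraMap R A r) • (ι s • d D B a - ι a • d D B s) := by
  rw [d_mul (B := B) hD, d_algHom (B := B) hD, AlgHom.commutes]
  simp only [map_mul]
  module

lemma h1_of_heq (hD : ∀ x y : A, D (x * y) = y • D x + σ x • D y)
    (a b s t c : A) (heq : c * (t * a) = c * (s * b))
    (hrel : ι t * ι a = ι s * ι b) :
    ι (σ c) • (ι a • d D B t + ι (σ t) • d D B a) =
      ι (σ c) • (ι b • d D B s + ι (σ s) • d D B b) := by
  have h0 := congrArg (d D B) heq
  rw [d_mul (B := B) hD, d_mul (B := B) hD, d_mul (B := B) hD, d_mul (B := B) hD] at h0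
  simp only [map_mul] at h0
  linear_combination (norm := module) h0 - hrel • d D B c

end Abstract

section Loc

variable {σ : A →ₐ[R] A} {S : Submonoid A} {D : A →ₗ[R] M}

local notation "ι" => algebraMap A (Localization S)

lemma cancelA {u : A} (hu : u ∈ S) {x y : Localization S ⊗[A] M}
    (h : ι u • x = ι u • y) : x = y :=
  ((IsLocalization.map_units (Localization S) ⟨u, hu⟩).smul_left_cancel).mp h

lemma cancelB {u : A} (hu : u ∈ S) {x y : Localization S}
    (h : ι u * x = ι u * y) : x = y :=
  (IsLocalization.map_units (Localization S) ⟨u, hu⟩).mul_left_cancel h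

lemma hmul (w : A) {u : A} (hu : u ∈ S) :
    ι (u * w) * Localization.mk 1 ⟨u, hu⟩ = ι w := by
  rw [← Localization.mk_one_eq_algebraMap, ← Localization.mk_one_eq_algebraMap,
    Localization.mk_mul, mul_one]
  rw [Localization.mk_eq_mk_iff, Localization.r_iff_exists]
  exact ⟨1, by push_cast; ring⟩

lemma hone {u : A} (hu : u ∈ S) : ι u * Localization.mk 1 ⟨u, hu⟩ = 1 := by
  have := hmul (S := S) 1 hu
  rw [mul_one, map_one] at this
  exact this

lemma ediv {u v : A} (hu : u ∈ S) (hv : v ∈ S) {x y : Localization S ⊗[A] M}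
    (h : ι v • x = ι u • y) :
    Localization.mk 1 ⟨u, hu⟩ • x = Localization.mk 1 ⟨v, hv⟩ • y := by
  apply cancelA (S.mul_mem hu hv)
  rw [smul_smul, smul_smul, hmul v hu]
  conv_lhs => rw [h]
  conv_rhs => rw [mul_comm u v, hmul u hv]

lemma eadd {u v : A} (hu : u ∈ S) (hv : v ∈ S) (x y : Localization S ⊗[A] M) :
    Localization.mk 1 ⟨u, hu⟩ • x + Localization.mk 1 ⟨v, hv⟩ • y =
      Localization.mk 1 ⟨u * v, S.mul_mem hu hv⟩ • (ι v • x + ι u • y) := by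
  apply cancelA (S.mul_mem hu hv)
  rw [smul_add, smul_smul, smul_smul, smul_smul, hmul v hu, hone (S.mul_mem hu hv), one_smul]
  conv_lhs => rw [mul_comm u v, hmul u hv]

lemma emul {u v : A} (hu : u ∈ S) (hv : v ∈ S) (x : Localization S ⊗[A] M) :
    Localization.mk 1 ⟨u, hu⟩ • Localization.mk 1 ⟨v, hv⟩ • x =
      Localization.mk 1 ⟨u * v, S.mul_mem hu hv⟩ • x := by
  rw [smul_smul, Localization.mk_mul, one_mul]
  rfl

lemma mk_decomp (x : A) (u : S) :
    Localization.mk x u = ι x * Localization.mk 1 u := by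
  rw [← Localization.mk_one_eq_algebraMap, Localization.mk_mul, mul_one, one_mul]

lemma mk_cancel_den (a : A) (s : S) :
    ι (s : A) * Localization.mk a s = ι a := by
  rw [← Localization.mk_one_eq_algebraMap, ← Localization.mk_one_eq_algebraMap,
    Localization.mk_mul]
  rw [Localization.mk_eq_mk_iff, Localization.r_iff_exists]
  exact ⟨1, by push_cast; ring⟩

end Loc

section Main

variable (σ : A →ₐ[R] A) (S : Submonoid A) (hσS : ∀ s ∈ S, σ s ∈ S) (D : A →ₗ[R] M)

local notation "ι" => algebraMap A (Localization S)

noncomputable def F (a : A) (s : S) : Localization S ⊗[A] M :=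
  Localization.mk (1 : A) ⟨(s : A) * σ (s : A), S.mul_mem s.2 (hσS s s.2)⟩ •
    (ι (s : A) • d D (Localization S) a - ι a • d D (Localization S) (s : A))

variable {σ S D}

lemma F_wd (hD : ∀ x y : A, D (x * y) = y • D x + σ x • D y) : ∀ {a b : A} {s t : S},
    Localization.r S (a, s) (b, t) → F σ S hσS D a s = F σ S hσS D b t := by
  intro a b s t hr
  rw [Localization.r_iff_exists] at hr
  obtain ⟨c, hc⟩ := hr
  have hc' : (c : A) * ((t : A) * a) = (c : A) * ((s : A) * b) := hc
  have hrel : ι (t : A) * ι a = ι (s : A) * ι b := by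
    apply cancelB c.2
    have := congrArg ι hc'
    simpa only [map_mul] using this
  have h1 := cancelA (hσS c c.2) (h1_of_heq (B := Localization S) hD a b (s : A) (t : A) c hc' hrel)
  exact ediv _ _ (wd_core hD a b (s : A) (t : A) hrel h1)

lemma F_add (hD : ∀ x y : A, D (x * y) = y • D x + σ x • D y) (a b : A) (s t : S) :
    F σ S hσS D ((s : A) * b + (t : A) * a) (s * t) = F σ S hσS D a s + F σ S hσS D b t := by
  simp only [F, Submonoid.coe_mul]
  rw [eadd]
  exact ediv _ _ (add_core hD a b (s : A) (t : A))

lemma F_smul (hD : ∀ x y : A, D (x * y) = y • D x + σ x • D y) (r : R) (a : A) (s : S) :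
    F σ S hσS D (r • a) s = r • F σ S hσS D a s := by
  simp only [F]
  rw [Algebra.smul_def r a, smul_core hD, smul_comm,
    ← IsScalarTower.algebraMap_apply R A (Localization S), algebraMap_smul]

variable (σ S D) in
noncomputable def DB (hD : ∀ x y : A, D (x * y) = y • D x + σ x • D y) :
    Localization S →ₗ[R] Localization S ⊗[A] M where
  toFun z := Localization.liftOn z (F σ S hσS D) (F_wd hσS hD)
  map_add' x y := by
    refine Localization.induction_on₂ x y ?_
    rintro ⟨a, s⟩ ⟨b, t⟩
    simp only [Localization.add_mk, Localization.liftOn_mk]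
    exact F_add hσS hD a b s t
  map_smul' r x := by
    refine Localization.induction_on x ?_
    rintro ⟨a, s⟩
    simp only [Localization.smul_mk, Localization.liftOn_mk, RingHom.id_apply]
    exact F_smul hσS hD r a s

lemma DB_mk (hD : ∀ x y : A, D (x * y) = y • D x + σ x • D y) (a : A) (s : S) :
    DB σ S hσS D hD (Localization.mk a s) = F σ S hσS D a s := rfl

lemma DB_ext (hD : ∀ x y : A, D (x * y) = y • D x + σ x • D y) (a : A) :
    DB σ S hσS D hD (ι a) = (1 : Localization S) ⊗ₜ[A] D a := by
  rw [← Localization.mk_one_eq_algebraMap, DB_mk]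
  have h2 : (⟨((1 : S) : A) * σ ((1 : S) : A), S.mul_mem (1 : S).2 (hσS _ (1 : S).2)⟩ : S) = 1 := by
    ext; simp
  rw [F, h2, Localization.mk_one, one_smul]
  simp only [OneMemClass.coe_one, map_one, one_smul, d_one hD, smul_zero, sub_zero]
  rfl

lemma sigma_mk (σB : Localization S →ₐ[R] Localization S)
    (hσB : ∀ a : A, σB (ι a) = ι (σ a)) (a : A) (s : S) :
    σB (Localization.mk a s) = Localization.mk (σ a) ⟨σ (s : A), hσS s s.2⟩ := by
  apply cancelB (hσS s s.2)
  rw [mk_cancel_den (σ a) ⟨σ (s : A), hσS s s.2⟩, ← hσB (s : A), ← map_mul,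
    mk_cancel_den a s, hσB]

lemma DB_leibniz (hD : ∀ x y : A, D (x * y) = y • D x + σ x • D y)
    (σB : Localization S →ₐ[R] Localization S)
    (hσB : ∀ a : A, σB (ι a) = ι (σ a)) (x y : Localization S) :
    DB σ S hσS D hD (x * y) =
      y • DB σ S hσS D hD x + σB x • DB σ S hσS D hD y := by
  refine Localization.induction_on₂ x y ?_
  rintro ⟨a, s⟩ ⟨b, t⟩
  rw [Localization.mk_mul, DB_mk, DB_mk, DB_mk, sigma_mk hσS σB hσB a s]
  simp only [F, Submonoid.coe_mul]
  rw [mk_decomp b t, mk_decomp (σ a) ⟨σ (s : A), hσS s s.2⟩, mul_smul, mul_smul,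
    emul, emul, smul_comm (ι b), smul_comm (ι (σ a)), eadd]
  exact ediv _ _ (leibniz_core hD a b (s : A) (t : A))

lemma unique_aux (σB : Localization S →ₐ[R] Localization S)
    (G : Localization S →ₗ[R] Localization S ⊗[A] M)
    (hL : ∀ x y : Localization S, G (x * y) = y • G x + σB x • G y)
    (hE : ∀ a : A, G (ι a) = (1 : Localization S) ⊗ₜ[A] D a) (a : A) (s : S) :
    ι (s : A) • G (Localization.mk a s) =
      (1 : Localization S) ⊗ₜ[A] D a - σB (Localization.mk a s) • ((1 : Localization S) ⊗ₜ[A] D (s : A)) := by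
  have hms : Localization.mk a s * ι (s : A) = ι a := by
    rw [mul_comm]; exact mk_cancel_den a s
  have h := hL (Localization.mk a s) (ι (s : A))
  rw [hms, hE a, hE (s : A)] at h
  rw [eq_sub_iff_add_eq]
  exact h.symm

lemma unique (σB : Localization S →ₐ[R] Localization S)
    (G G' : Localization S →ₗ[R] Localization S ⊗[A] M)
    (hL : ∀ x y : Localization S, G (x * y) = y • G x + σB x • G y)
    (hE : ∀ a : A, G (ι a) = (1 : Localization S) ⊗ₜ[A] D a)
    (hL' : ∀ x y : Localization S, G' (x * y) = y • G' x + σB x • G' y)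
    (hE' : ∀ a : A, G' (ι a) = (1 : Localization S) ⊗ₜ[A] D a) :
    G = G' := by
  ext z
  refine Localization.induction_on z ?_
  rintro ⟨a, s⟩
  apply cancelA s.2
  rw [unique_aux σB G hL hE a s, unique_aux σB G' hL' hE' a s]

end Main

end Stmt6Aux

open scoped TensorProduct

/-- Every `σ`-derivation `D : A → M` over `R` extends uniquely to a `σ_B`-derivation
`D_B : B → B ⊗[A] M` over `R` on the localization `B := S⁻¹A` (where `σ(S) ⊆ S`), and `D_B` is
given by the quotient formula `D_B(a/s) = (1/(s·σ(s))) • (s•(1 ⊗ D(a)) - a•(1 ⊗ D(s)))`. -/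
theorem stmt6 {R A M : Type*} [CommRing R] [CommRing A] [Algebra R A]
    [AddCommGroup M] [Module R M] [Module A M] [IsScalarTower R A M]
    (σ : A →ₐ[R] A) (S : Submonoid A) (hσS : ∀ s ∈ S, σ s ∈ S)
    (σB : Localization S →ₐ[R] Localization S)
    (hσB : ∀ a : A,
      σB (algebraMap A (Localization S) a) = algebraMap A (Localization S) (σ a))
    (D : A →ₗ[R] M) (hD : ∀ x y : A, D (x * y) = y • D x + σ x • D y) :
    ∃ DB : Localization S →ₗ[R] Localization S ⊗[A] M,
      ((∀ x y : Localization S, DB (x * y) = y • DB x + σB x • DB y) ∧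
        ∀ a : A, DB (algebraMap A (Localization S) a) = 1 ⊗ₜ[A] D a) ∧
      (∀ (a : A) (s : S),
        DB (Localization.mk a s) =
          Localization.mk (1 : A) ⟨(s : A) * σ (s : A), S.mul_mem s.2 (hσS s s.2)⟩ •
            (algebraMap A (Localization S) (s : A) • ((1 : Localization S) ⊗ₜ[A] D a) -
              algebraMap A (Localization S) a • ((1 : Localization S) ⊗ₜ[A] D (s : A)))) ∧
      ∀ DB' : Localization S →ₗ[R] Localization S ⊗[A] M,
        (∀ x y : Localization S, DB' (x * y) = y • DB' x + σB x • DB' y) →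
        (∀ a : A, DB' (algebraMap A (Localization S) a) = 1 ⊗ₜ[A] D a) →
        DB' = DB := by
  refine ⟨Stmt6Aux.DB σ S hσS D hD, ⟨Stmt6Aux.DB_leibniz hσS hD σB hσB, Stmt6Aux.DB_ext hσS hD⟩,
    fun a s => Stmt6Aux.DB_mk hσS hD a s, fun DB' hL' hE' =>
    Stmt6Aux.unique σB DB' (Stmt6Aux.DB σ S hσS D hD) hL' hE'
      (Stmt6Aux.DB_leibniz hσS hD σB hσB) (Stmt6Aux.DB_ext hσS hD)⟩
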